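/- Let H be the set of formal Laurent series L ∈ F_p((X^{-1})) with ν(L) < 0, equipped with the normalized Haar measure h. For polynomials B_1, ..., B_k ∈ F_p[X] each of degree at least 1, the set R(B_1,...,B_k) = {L ∈ H : A_j(L) = B_j for 1 ≤ j ≤ k} (Laurent series whose first k continued fraction partial quotients are B_1,...,B_k) has Haar measure h(R(B_1,...,B_k)) = p^{-2(deg B_1 + ... + deg B_k)}. -/

import Mathlib

open scoped Classical ENNReal
open Polynomial

noncomputable section

namespace KH

/-- The field `F_p((X⁻¹))` of formal Laurent series in `X⁻¹` over `ZMod p`,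
modeled as Hahn series over `ℤ`: the coefficient at `i : ℤ` is the coefficient of `X^{-i}`. -/
abbrev LS (p : ℕ) := HahnSeries ℤ (ZMod p)

/-- The element `X` of `F_p((X⁻¹))` (exponent `-1` in `X⁻¹`). -/
def Xls (p : ℕ) : LS p := HahnSeries.single (-1 : ℤ) 1

/-- `ν(L) = -w` where `w` is the order of `L` (`ν(0) = 0` by convention). -/
def nu {p : ℕ} (L : LS p) : ℤ := -(HahnSeries.order L)

/-- Embedding of polynomials `F_p[X] → F_p((X⁻¹))`, sending `X` to `Xls`. -/
def P2L (p : ℕ) [Fact p.Prime] : Polynomial (ZMod p) →+* LS p :=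
  (Polynomial.aeval (Xls p)).toRingHom

/-- The fractional part `{L} = ∑_{i ≥ 1} a_i X^{-i}`. -/
def frac {p : ℕ} (L : LS p) : LS p where
  coeff i := if 1 ≤ i then L.coeff i else 0
  isPWO_support' := L.isPWO_support'.mono (by
    intro i hi
    by_cases h : (1:ℤ) ≤ i <;> simp [HahnSeries.support, h] at hi ⊢ <;> tauto)

/-- Continued fraction remainders: `cfRem L 0 = L`, `cfRem L (n+1) = 1/{cfRem L n}`. -/
def cfRem {p : ℕ} [Fact p.Prime] (L : LS p) : ℕ → LS p
  | 0 => L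
  | n + 1 => (frac (cfRem L n))⁻¹

/-- The `n`-th continued fraction partial quotient of `L` (as a Laurent series; it is the
polynomial part of the `n`-th remainder). -/
def cfA {p : ℕ} [Fact p.Prime] (L : LS p) (n : ℕ) : LS p :=
  cfRem L n - frac (cfRem L n)

/-- The degree of the `n`-th partial quotient. -/
def degA {p : ℕ} [Fact p.Prime] (L : LS p) (n : ℕ) : ℤ := nu (cfA L n)

/-- Denominators `Q_h` of the convergents of `L`. -/
def cfQ {p : ℕ} [Fact p.Prime] (L : LS p) : ℕ → LS p
  | 0 => 1
  | 1 => cfA L 1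
  | n + 2 => cfA L (n + 2) * cfQ L (n + 1) + cfQ L n

/-- Numerators `P_h` of the convergents of `L`. -/
def cfP {p : ℕ} [Fact p.Prime] (L : LS p) : ℕ → LS p
  | 0 => cfA L 0
  | 1 => cfA L 1 * cfA L 0 + 1
  | n + 2 => cfA L (n + 2) * cfP L (n + 1) + cfP L n

/-- `d_h = deg Q_h`. -/
def dQ {p : ℕ} [Fact p.Prime] (L : LS p) (h : ℕ) : ℤ := nu (cfQ L h)

/-- Evaluation at `X = p` of (the fractional part of) a Laurent series:
`∑_{i ≥ 1} a_i p^{-i}` with digits `a_i ∈ {0, …, p-1}`. -/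
def evalAtP {p : ℕ} (L : LS p) : ℝ :=
  ∑' i : ℕ, ((L.coeff ((i : ℤ) + 1)).val : ℝ) / (p : ℝ) ^ (i + 1)

/-- The polynomial over `F_p` associated with `n ∈ ℕ`, whose coefficients are the
base-`p` digits of `n`. -/
def nPoly (p : ℕ) (n : ℕ) : Polynomial (ZMod p) :=
  ∑ i ∈ Finset.range (n + 1), Polynomial.C ((n / p ^ i % p : ℕ) : ZMod p) * Polynomial.X ^ i

/-- The `n`-th point of the digital Kronecker sequence associated with `L`. -/
def kron (p : ℕ) [Fact p.Prime] (L : LS p) (n : ℕ) : ℝ :=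
  evalAtP (frac (P2L p (nPoly p n) * L))

/-- The `i`-th digit of `n(X)` in base `b(X)`. -/
def haltonDigit (p : ℕ) [Fact p.Prime] (b : Polynomial (ZMod p)) (n i : ℕ) :
    Polynomial (ZMod p) :=
  (nPoly p n /ₘ b ^ i) %ₘ b

/-- Evaluation of a polynomial over `F_p` at `p` (digits in `{0,…,p-1}`). -/
def polyEvalNat (p : ℕ) (a : Polynomial (ZMod p)) : ℕ :=
  ∑ i ∈ Finset.range (a.natDegree + 1), (a.coeff i).val * p ^ i

/-- The `n`-th point of the van der Corput sequence in base `b(X)` over `F_p`. -/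
def vdc (p : ℕ) [Fact p.Prime] (b : Polynomial (ZMod p)) (n : ℕ) : ℝ :=
  ∑' i : ℕ, (polyEvalNat p (haltonDigit p b n i) : ℝ) / (p : ℝ) ^ (b.natDegree * (i + 1))

/-- Number of indices `n < N` with `z n` in the box `∏ [a i, b i)`. -/
def countIn (d : ℕ) (z : ℕ → Fin d → ℝ) (N : ℕ) (a b : Fin d → ℝ) : ℕ :=
  ((Finset.range N).filter fun n => ∀ i, a i ≤ z n i ∧ z n i < b i).card

/-- The (extreme) discrepancy of the first `N` points of `z` in `[0,1)^d`. -/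
def disc (d : ℕ) (z : ℕ → Fin d → ℝ) (N : ℕ) : ℝ :=
  sSup { r | ∃ a b : Fin d → ℝ, (∀ i, 0 ≤ a i ∧ a i ≤ b i ∧ b i ≤ 1) ∧
    r = |(countIn d z N a b : ℝ) / N - ∏ i, (b i - a i)| }

/-- The star discrepancy of the first `N` points of `z` in `[0,1)^d`. -/
def starDisc (d : ℕ) (z : ℕ → Fin d → ℝ) (N : ℕ) : ℝ :=
  sSup { r | ∃ b : Fin d → ℝ, (∀ i, 0 < b i ∧ b i ≤ 1) ∧
    r = |(countIn d z N (fun _ => 0) b : ℝ) / N - ∏ i, b i| }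

/-- The Laurent series `∑_{i ≥ 1} a_{i-1} X^{-i}` associated with a coefficient
sequence `a : ℕ → ZMod p`; this identifies `H = {L : ν(L) < 0}` with `ℕ → ZMod p`. -/
def toLS (p : ℕ) (a : ℕ → ZMod p) : LS p where
  coeff i := if h : 1 ≤ i then a (i - 1).toNat else 0
  isPWO_support' := by
    have : BddBelow {i : ℤ | (if h : 1 ≤ i then a (i - 1).toNat else 0) ≠ 0} := by
      refine ⟨1, fun i hi => ?_⟩
      by_cases h : (1:ℤ) ≤ i
      · exact h
      · simp [h] at hi
    exact (Set.isPWO_iff_isWF.mpr this.wellFoundedOn_lt)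

instance : MeasurableSpace (ZMod p) := ⊤

/-- A `(t, m, s)`-net in base `p`. -/
def IsNet (p t m s : ℕ) (P : Fin (p ^ m) → Fin s → ℝ) : Prop :=
  t ≤ m ∧ ∀ (d a : Fin s → ℕ), (∑ i, d i) = m - t → (∀ i, a i < p ^ d i) →
    (Finset.univ.filter fun n => ∀ i,
      (a i : ℝ) / (p : ℝ) ^ d i ≤ P n i ∧ P n i < ((a i : ℝ) + 1) / (p : ℝ) ^ d i).card = p ^ t

/-- A `(t, s)`-sequence in base `p`. -/
def IsTSeq (p t s : ℕ) (z : ℕ → Fin s → ℝ) : Prop :=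
  ∀ m k : ℕ, t < m → IsNet p t m s fun n => z (k * p ^ m + (n : ℕ))


section Aux

variable {p : ℕ} [Fact p.Prime]

/-- All coefficients below `n` vanish. -/
def OrdGe (n : ℤ) (x : LS p) : Prop := ∀ i < n, x.coeff i = 0

lemma OrdGe.mono {m n : ℤ} {x : LS p} (h : OrdGe n x) (hmn : m ≤ n) : OrdGe m x :=
  fun i hi => h i (lt_of_lt_of_le hi hmn)

lemma OrdGe.add {n : ℤ} {x y : LS p} (hx : OrdGe n x) (hy : OrdGe n y) : OrdGe n (x + y) :=
  fun i hi => by rw [HahnSeries.coeff_add, hx i hi, hy i hi, add_zero]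

lemma OrdGe.mul {m n : ℤ} {x y : LS p} (hx : OrdGe m x) (hy : OrdGe n y) :
    OrdGe (m + n) (x * y) := by
  intro i hi
  rw [HahnSeries.coeff_mul]
  apply Finset.sum_eq_zero
  rintro ⟨a, b⟩ hab
  rw [Finset.mem_addAntidiagonal] at hab
  obtain ⟨-, -, hs⟩ := hab
  by_cases h : a < m
  · rw [hx a h, zero_mul]
  · rw [hy b (by omega), mul_zero]

lemma OrdGe.of_le_order {n : ℤ} {x : LS p} (h : n ≤ x.order) : OrdGe n x :=
  fun _ hi => HahnSeries.coeff_eq_zero_of_lt_order (lt_of_lt_of_le hi h)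

lemma OrdGe.le_order {n : ℤ} {x : LS p} (h : OrdGe n x) (hx : x ≠ 0) : n ≤ x.order := by
  by_contra hc
  push_neg at hc
  exact (mt HahnSeries.coeff_order_eq_zero.mp hx) (h _ hc)

lemma order_inv {x : LS p} (hx : x ≠ 0) : (x⁻¹).order = -x.order := by
  have h2 : (x * x⁻¹).order = x.order + (x⁻¹).order :=
    HahnSeries.order_mul hx (inv_ne_zero hx)
  rw [mul_inv_cancel₀ hx, HahnSeries.order_one] at h2
  omega

lemma Xls_pow (n : ℕ) : (Xls p) ^ n = HahnSeries.single (-(n : ℤ)) 1 := by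
  induction n with
  | zero => simp [HahnSeries.single_zero_one]
  | succ n ih =>
      rw [pow_succ, ih, Xls, HahnSeries.single_mul_single, mul_one]
      congr 1
      push_cast
      ring

lemma P2L_monomial (n : ℕ) (a : ZMod p) :
    P2L p (Polynomial.monomial n a) = HahnSeries.single (-(n : ℤ)) a := by
  show Polynomial.aeval (Xls p) (Polynomial.monomial n a) = _
  rw [Polynomial.aeval_monomial, Xls_pow]
  have halg : (algebraMap (ZMod p) (LS p)) a = HahnSeries.single (0 : ℤ) a := by
    have huniq : (algebraMap (ZMod p) (LS p)) = (HahnSeries.C : ZMod p →+* LS p) :=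
      RingHom.ext_zmod _ _
    rw [huniq, HahnSeries.C_apply]
  rw [halg, HahnSeries.single_mul_single, zero_add, mul_one]

lemma P2L_coeff (B : Polynomial (ZMod p)) (i : ℤ) :
    (P2L p B).coeff i = if 0 < i then 0 else B.coeff (-i).toNat := by
  induction B using Polynomial.induction_on' with
  | add f g hf hg =>
      rw [map_add, HahnSeries.coeff_add, hf, hg, Polynomial.coeff_add]
      split <;> simp
  | monomial n a =>
      rw [P2L_monomial, HahnSeries.coeff_single, Polynomial.coeff_monomial]
      split_ifs with h1 h2 h3 h4 <;> try rfl
      · omega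
      · omega
      · omega

lemma P2L_coeff_pos (B : Polynomial (ZMod p)) {i : ℤ} (hi : 0 < i) :
    (P2L p B).coeff i = 0 := by rw [P2L_coeff, if_pos hi]

lemma P2L_coeff_deg (B : Polynomial (ZMod p)) :
    (P2L p B).coeff (-(B.natDegree : ℤ)) = B.leadingCoeff := by
  rw [P2L_coeff, if_neg (by omega)]
  congr 1
  omega

lemma P2L_ne_zero {B : Polynomial (ZMod p)} (hb : B ≠ 0) : P2L p B ≠ 0 := by
  intro h
  have := P2L_coeff_deg B
  rw [h, HahnSeries.coeff_zero] at this
  exact Polynomial.leadingCoeff_ne_zero.mpr hb this.symm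

lemma frac_coeff (L : LS p) (i : ℤ) :
    (frac L).coeff i = if 1 ≤ i then L.coeff i else 0 := rfl

lemma ordGe_one_frac (L : LS p) : OrdGe 1 (frac L) :=
  fun i hi => by rw [frac_coeff, if_neg (by omega)]

lemma frac_eq_self {L : LS p} (h : OrdGe 1 L) : frac L = L := by
  apply HahnSeries.ext
  funext i
  rw [frac_coeff]
  split_ifs with h1
  · rfl
  · rw [h i (by omega)]

lemma frac_zero : frac (0 : LS p) = 0 := frac_eq_self (fun i _ => HahnSeries.coeff_zero)

lemma frac_add_P2L (b : Polynomial (ZMod p)) {M : LS p} (hM : OrdGe 1 M) :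
    frac (P2L p b + M) = M := by
  apply HahnSeries.ext
  funext i
  rw [frac_coeff, HahnSeries.coeff_add]
  split_ifs with h1
  · rw [P2L_coeff_pos b (by omega), zero_add]
  · rw [hM i (by omega)]

lemma cfRem_one {L : LS p} (h : OrdGe 1 L) : cfRem L 1 = L⁻¹ := by
  show (frac (cfRem L 0))⁻¹ = L⁻¹
  rw [show cfRem L 0 = L from rfl, frac_eq_self h]

lemma frac_frac (L : LS p) : frac (frac L) = frac L := frac_eq_self (ordGe_one_frac L)

lemma cfRem_shift (L : LS p) (n : ℕ) :
    cfRem L (n + 2) = cfRem (frac (cfRem L 1)) (n + 1) := by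
  induction n with
  | zero =>
      show (frac (cfRem L 1))⁻¹ = (frac (frac (cfRem L 1)))⁻¹
      rw [frac_frac]
  | succ n ih =>
      show (frac (cfRem L (n + 2)))⁻¹ = (frac (cfRem (frac (cfRem L 1)) (n + 1)))⁻¹
      rw [ih]

lemma cfA_shift (L : LS p) (n : ℕ) :
    cfA L (n + 2) = cfA (frac (cfRem L 1)) (n + 1) := by
  rw [cfA, cfA, cfRem_shift]

lemma cfA_zero_one : cfA (0 : LS p) 1 = 0 := by
  have h : cfRem (0 : LS p) 1 = 0 := by
    show (frac (cfRem (0 : LS p) 0))⁻¹ = 0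
    rw [show cfRem (0 : LS p) 0 = 0 from rfl, frac_zero, inv_zero]
  rw [cfA, h, frac_zero, sub_zero]

/-- The finite continued fraction `[0; b₁, …, b_k]` as a Laurent series. -/
def cf0 : List (Polynomial (ZMod p)) → LS p
  | [] => 0
  | b :: t => (P2L p b + cf0 t)⁻¹

/-- Sum of the degrees. -/
def dsum (l : List (Polynomial (ZMod p))) : ℕ := (l.map Polynomial.natDegree).sum

lemma order_add_P2L {b : Polynomial (ZMod p)} (hb : b ≠ 0) {M : LS p} (hM : OrdGe 1 M) :
    (P2L p b + M) ≠ 0 ∧ (P2L p b + M).order = -(b.natDegree : ℤ) := by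
  have hc : (P2L p b + M).coeff (-(b.natDegree : ℤ)) = b.leadingCoeff := by
    rw [HahnSeries.coeff_add, P2L_coeff_deg, hM _ (by omega), add_zero]
  have hne : (P2L p b + M) ≠ 0 := by
    intro h
    rw [h, HahnSeries.coeff_zero] at hc
    exact Polynomial.leadingCoeff_ne_zero.mpr hb hc.symm
  refine ⟨hne, le_antisymm ?_ ?_⟩
  · apply HahnSeries.order_le_of_coeff_ne_zero
    rw [hc]
    exact Polynomial.leadingCoeff_ne_zero.mpr hb
  · refine OrdGe.le_order (fun i hi => ?_) hne
    rw [HahnSeries.coeff_add, P2L_coeff, if_neg (by omega), hM i (by omega),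
      Polynomial.coeff_eq_zero_of_natDegree_lt (by omega), add_zero]

lemma ordGe_one_cf0 (l : List (Polynomial (ZMod p))) (hl : ∀ b ∈ l, 1 ≤ b.natDegree) :
    OrdGe 1 (cf0 l) := by
  cases l with
  | nil => exact fun i _ => HahnSeries.coeff_zero
  | cons b t =>
      have hb1 : 1 ≤ b.natDegree := hl b List.mem_cons_self
      have hb0 : b ≠ 0 := fun h => by simp [h] at hb1
      have hM : OrdGe 1 (cf0 t) := ordGe_one_cf0 t (fun x hx => hl x (List.mem_cons_of_mem _ hx))
      obtain ⟨hne, hord⟩ := order_add_P2L hb0 hM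
      show OrdGe 1 (P2L p b + cf0 t)⁻¹
      apply OrdGe.of_le_order
      rw [order_inv hne, hord]
      omega

lemma inv_sub_inv' {K : Type*} [Field K] {u v : K} (hu : u ≠ 0) (hv : v ≠ 0) :
    u⁻¹ - v⁻¹ = (v - u) * (u⁻¹ * v⁻¹) := by
  field_simp

lemma main_lemma (l : List (Polynomial (ZMod p))) (hl : ∀ b ∈ l, 1 ≤ b.natDegree)
    (L : LS p) (hL : OrdGe 1 L) :
    (∀ j (hj : j < l.length), cfA L (j + 1) = P2L p (l.get ⟨j, hj⟩)) ↔
    (∀ i : ℤ, i ≤ 2 * (dsum l : ℤ) → L.coeff i = (cf0 l).coeff i) := by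
  induction l generalizing L with
  | nil =>
      constructor
      · intro _ i hi
        rw [show cf0 (p := p) [] = 0 from rfl, HahnSeries.coeff_zero]
        exact hL i (by simp [dsum] at hi; omega)
      · intro _ j hj
        exact absurd hj (by simp)
  | cons b t ih =>
      have hb1 : 1 ≤ b.natDegree := hl b List.mem_cons_self
      have hb0 : b ≠ 0 := fun h => by simp [h] at hb1
      have hM₀ : OrdGe 1 (cf0 t) :=
        ordGe_one_cf0 t (fun x hx => hl x (List.mem_cons_of_mem _ hx))
      obtain ⟨hu₀ne, hu₀ord⟩ := order_add_P2L hb0 hM₀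
      have hL₀ : cf0 (b :: t) = (P2L p b + cf0 t)⁻¹ := rfl
      have hL₀ne : cf0 (p := p) (b :: t) ≠ 0 := by rw [hL₀]; exact inv_ne_zero hu₀ne
      have hL₀ord : (cf0 (p := p) (b :: t)).order = (b.natDegree : ℤ) := by
        rw [hL₀, order_inv hu₀ne, hu₀ord]; ring
      have hds : (dsum (b :: t) : ℤ) = (b.natDegree : ℤ) + (dsum t : ℤ) := by
        simp [dsum]
      have iht := fun (M : LS p) (hM : OrdGe 1 M) =>
        ih (fun x hx => hl x (List.mem_cons_of_mem _ hx)) M hM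
      constructor
      · -- forward
        intro H
        have H0 : cfA L 1 = P2L p b := by
          have := H 0 (by simp)
          simpa using this
        have hLne : L ≠ 0 := by
          intro h
          rw [h, cfA_zero_one] at H0
          exact P2L_ne_zero hb0 H0.symm
        have hrem1 : cfRem L 1 = L⁻¹ := cfRem_one hL
        set M := frac (L⁻¹) with hMdef
        have hM : OrdGe 1 M := ordGe_one_frac _
        have hLinv : L⁻¹ = P2L p b + M := by
          have : L⁻¹ - M = P2L p b := by
            rw [← H0, cfA, hrem1, hMdef]
          rw [← this]; ring
        obtain ⟨hune, huord⟩ := order_add_P2L hb0 hM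
        have hLeq : L = (P2L p b + M)⁻¹ := by rw [← hLinv, inv_inv]
        have Hrest : ∀ j (hj : j < t.length), cfA M (j + 1) = P2L p (t.get ⟨j, hj⟩) := by
          intro j hj
          have := H (j + 1) (by simpa using Nat.succ_lt_succ hj)
          rw [cfA_shift, hrem1, ← hMdef] at this
          simpa using this
        have hMagree := (iht M hM).mp Hrest
        intro i hi
        have hdiff : OrdGe (2 * (dsum (b :: t) : ℤ) + 1) (L - cf0 (b :: t)) := by
          have key : L - cf0 (b :: t) =
              (cf0 t - M) * ((P2L p b + M)⁻¹ * (P2L p b + cf0 t)⁻¹) := by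
            rw [hLeq, hL₀]
            rw [inv_sub_inv' hune hu₀ne]
            congr 1
            ring
          rw [key]
          have h1 : OrdGe (2 * (dsum t : ℤ) + 1) (cf0 t - M) := by
            intro i hi
            rw [HahnSeries.coeff_sub, hMagree i (by omega), sub_self]
          have h2 : OrdGe (b.natDegree : ℤ) ((P2L p b + M)⁻¹) := by
            apply OrdGe.of_le_order
            rw [order_inv hune, huord]
            omega
          have h3 : OrdGe (b.natDegree : ℤ) ((P2L p b + cf0 t)⁻¹) := by
            apply OrdGe.of_le_order
            rw [order_inv hu₀ne, hu₀ord]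
            omega
          have := h1.mul (h2.mul h3)
          apply this.mono
          omega
        have := hdiff i (by omega)
        rw [HahnSeries.coeff_sub, sub_eq_zero] at this
        exact this
      · -- backward
        intro HA
        have he2 : (b.natDegree : ℤ) ≤ 2 * (dsum (b :: t) : ℤ) := by
          rw [hds]; omega
        have hLcoe : L.coeff (b.natDegree : ℤ) ≠ 0 := by
          rw [HA _ he2, ← hL₀ord]
          exact (mt HahnSeries.coeff_order_eq_zero.mp hL₀ne)
        have hLne : L ≠ 0 := fun h => hLcoe (by rw [h, HahnSeries.coeff_zero])
        have hLord : L.order = (b.natDegree : ℤ) := by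
          refine le_antisymm (HahnSeries.order_le_of_coeff_ne_zero hLcoe) ?_
          refine OrdGe.le_order (fun i hi => ?_) hLne
          rw [HA i (by omega)]
          exact HahnSeries.coeff_eq_zero_of_lt_order (by rw [hL₀ord]; omega)
        set δ := L⁻¹ - (P2L p b + cf0 t) with hδdef
        have hδ : OrdGe (2 * (dsum t : ℤ) + 1) δ := by
          have key : δ = (cf0 (b :: t) - L) * (L⁻¹ * (cf0 (b :: t))⁻¹) := by
            rw [hδdef, ← inv_sub_inv' hLne hL₀ne]
            congr 1
            rw [hL₀, inv_inv]
          rw [key]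
          have h1 : OrdGe (2 * (dsum (b :: t) : ℤ) + 1) (cf0 (b :: t) - L) := by
            intro i hi
            rw [HahnSeries.coeff_sub, HA i (by omega), sub_self]
          have h2 : OrdGe (-(b.natDegree : ℤ)) (L⁻¹) := by
            apply OrdGe.of_le_order
            rw [order_inv hLne, hLord]
          have h3 : OrdGe (-(b.natDegree : ℤ)) ((cf0 (b :: t))⁻¹) := by
            apply OrdGe.of_le_order
            rw [order_inv hL₀ne, hL₀ord]
          have := h1.mul (h2.mul h3)
          apply this.mono
          omega
        have hδ1 : OrdGe 1 δ := hδ.mono (by omega)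
        set M := cf0 t + δ with hMdef
        have hM : OrdGe 1 M := hM₀.add hδ1
        have hLinv : L⁻¹ = P2L p b + M := by
          rw [hMdef]
          have : δ = L⁻¹ - (P2L p b + cf0 t) := hδdef
          rw [this]; ring
        have hrem1 : cfRem L 1 = L⁻¹ := cfRem_one hL
        have hfrac : frac (L⁻¹) = M := by rw [hLinv, frac_add_P2L b hM]
        have H0 : cfA L 1 = P2L p b := by
          rw [cfA, hrem1, hfrac, hLinv]; ring
        have hMagree : ∀ i : ℤ, i ≤ 2 * (dsum t : ℤ) → M.coeff i = (cf0 t).coeff i := by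
          intro i hi
          rw [hMdef, HahnSeries.coeff_add, hδ i (by omega), add_zero]
        have Hrest := (iht M hM).mpr hMagree
        intro j hj
        match j with
        | 0 => simpa using H0
        | (n + 1) =>
            have hn : n < t.length := by simpa using hj
            have := Hrest n hn
            rw [cfA_shift, hrem1, hfrac]
            simpa using this

lemma toLS_coeff (a : ℕ → ZMod p) (n : ℕ) : (toLS p a).coeff ((n : ℤ) + 1) = a n := by
  show (if h : 1 ≤ (n : ℤ) + 1 then a ((n : ℤ) + 1 - 1).toNat else 0) = a n
  rw [dif_pos (by omega)]
  congr 1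
  omega

lemma toLS_coeff' (a : ℕ → ZMod p) {i : ℤ} (hi : 1 ≤ i) :
    (toLS p a).coeff i = a (i - 1).toNat := by
  show (if h : 1 ≤ i then a (i - 1).toNat else 0) = a (i - 1).toNat
  rw [dif_pos hi]

lemma ordGe_one_toLS (a : ℕ → ZMod p) : OrdGe 1 (toLS p a) := by
  intro i hi
  show (if h : 1 ≤ i then a (i - 1).toNat else 0) = 0
  rw [dif_neg (by omega)]

end Aux


open MeasureTheory in
/-- Under the Haar (uniform product) measure on
`H ≅ Π_{i≥1} F_p` (via Laurent coefficients), the cylinder set of Laurent series whose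
first `k` continued fraction partial quotients are `B_1, …, B_k` has measure
`p^{-2(deg B_1 + ⋯ + deg B_k)}`. -/
theorem statement6 (p : ℕ) [Fact p.Prime]
    (μ : Measure (ℕ → ZMod p)) [IsProbabilityMeasure μ]
    (hμ : ∀ (m : ℕ) (v : Fin m → ZMod p),
      μ {a | ∀ i : Fin m, a (i : ℕ) = v i} = ((p : ℝ≥0∞))⁻¹ ^ m)
    (k : ℕ) (B : Fin k → Polynomial (ZMod p)) (hB : ∀ j, 1 ≤ (B j).natDegree) :
    μ {a : ℕ → ZMod p | ∀ j : Fin k, cfA (toLS p a) ((j : ℕ) + 1) = P2L p (B j)}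
      = ((p : ℝ≥0∞))⁻¹ ^ (2 * ∑ j, (B j).natDegree) := by
  classical
  have hl : ∀ b ∈ List.ofFn B, 1 ≤ b.natDegree := by
    intro b hb
    rw [List.mem_ofFn] at hb
    obtain ⟨j, rfl⟩ := hb
    exact hB j
  have hD : dsum (List.ofFn B) = ∑ j, (B j).natDegree := by
    rw [dsum, List.map_ofFn, List.sum_ofFn]
    rfl
  have hcf0 : OrdGe 1 (cf0 (List.ofFn B)) := ordGe_one_cf0 _ hl
  have hset : {a : ℕ → ZMod p | ∀ j : Fin k, cfA (toLS p a) ((j : ℕ) + 1) = P2L p (B j)}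
      = {a : ℕ → ZMod p | ∀ i : Fin (2 * dsum (List.ofFn B)),
          a (i : ℕ) = (cf0 (List.ofFn B)).coeff (((i : ℕ) : ℤ) + 1)} := by
    ext a
    simp only [Set.mem_setOf_eq]
    have hm := main_lemma (List.ofFn B) hl (toLS p a) (ordGe_one_toLS a)
    constructor
    · intro h i
      have h1 : ∀ j (hj : j < (List.ofFn B).length),
          cfA (toLS p a) (j + 1) = P2L p ((List.ofFn B).get ⟨j, hj⟩) := by
        intro j hj
        have hjk : j < k := by simpa using hj
        have hg : (List.ofFn B).get ⟨j, hj⟩ = B ⟨j, hjk⟩ := by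
          rw [List.get_ofFn]
          congr 1
        rw [hg]
        exact h ⟨j, hjk⟩
      have h2 := hm.mp h1
      have hib : (((i : ℕ) : ℤ)) + 1 ≤ 2 * (dsum (List.ofFn B) : ℤ) := by
        have := i.isLt
        omega
      have h3 := h2 _ hib
      rw [toLS_coeff] at h3
      exact h3
    · intro h
      have h2 : ∀ i : ℤ, i ≤ 2 * (dsum (List.ofFn B) : ℤ) →
          (toLS p a).coeff i = (cf0 (List.ofFn B)).coeff i := by
        intro i hi
        by_cases h1 : 1 ≤ i
        · have hj : (i - 1).toNat < 2 * dsum (List.ofFn B) := by omega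
          have hx := h ⟨(i - 1).toNat, hj⟩
          rw [toLS_coeff' a h1]
          simp only [Fin.val_mk] at hx
          rw [hx]
          congr 1
          omega
        · rw [ordGe_one_toLS a i (by omega), hcf0 i (by omega)]
      intro j
      have hj : (j : ℕ) < (List.ofFn B).length := by simpa using j.isLt
      have h3 := hm.mpr h2 (j : ℕ) hj
      have hg : (List.ofFn B).get ⟨(j : ℕ), hj⟩ = B j := by
        rw [List.get_ofFn]
        congr 1
      rw [hg] at h3
      exact h3
  rw [hset, hμ (2 * dsum (List.ofFn B)) (fun i => (cf0 (List.ofFn B)).coeff (((i : ℕ) : ℤ) + 1)),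
    hD]

end KH
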